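/- Let δ be a derivation on a ring R, M an R-bimodule, d a δ-derivation on M, and ₗF_r a symmetric Gabriel filter induced by a left Gabriel filter F_l and a right Gabriel filter F_r. If d(ₗt_r(M)) ⊆ ₗt_r(M), then d extends to a derivation on the symmetric module of quotients ₗM_r such that d q_M = q_M d. -/

import Mathlib

open MulOpposite TensorProduct

/-- A derivation on a ring `S`: an additive map satisfying the Leibniz rule
`δ (a * b) = δ a * b + a * δ b`. -/
def IsDerivation {S : Type*} [Ring S] (δ : S → S) : Prop :=
  (∀ a b : S, δ (a + b) = δ a + δ b) ∧ (∀ a b : S, δ (a * b) = δ a * b + a * δ b)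

/-- A Gabriel filter of left ideals of a ring `S`.  Taking `S = Rᵐᵒᵖ`, this encodes a
Gabriel filter of right ideals of `R`. -/
structure GabrielFilter (S : Type*) [Ring S] where
  sets : Set (Ideal S)
  top_mem : ⊤ ∈ sets
  mono : ∀ ⦃I J : Ideal S⦄, I ∈ sets → I ≤ J → J ∈ sets
  inf_mem : ∀ ⦃I J : Ideal S⦄, I ∈ sets → J ∈ sets → I ⊓ J ∈ sets
  quot_mem : ∀ ⦃I : Ideal S⦄, I ∈ sets → ∀ s : S,
    Submodule.comap (LinearMap.toSpanSingleton S S s) I ∈ sets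
  trans : ∀ ⦃I J : Ideal S⦄, J ∈ sets →
    (∀ s ∈ J, Submodule.comap (LinearMap.toSpanSingleton S S s) I ∈ sets) → I ∈ sets

/-- The torsion set of a module for the torsion theory corresponding to a filter `𝔉` of
ideals: the elements whose annihilator belongs to `𝔉`. -/
def torsionSet {S : Type*} [Ring S] (𝔉 : Set (Ideal S)) (M : Type*) [AddCommGroup M]
    [Module S M] : Set M :=
  {x : M | LinearMap.ker (LinearMap.toSpanSingleton S M x) ∈ 𝔉}

/-- The enveloping ring `R ⊗_ℤ Rᵐᵒᵖ`; an `R`-bimodule is the same thing as a right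
`R ⊗_ℤ Rᵐᵒᵖ`-module, i.e. a left `(R ⊗_ℤ Rᵐᵒᵖ)ᵐᵒᵖ`-module, via `x • (r ⊗ s) = s x r`. -/
abbrev Env (R : Type*) [Ring R] := R ⊗[ℤ] Rᵐᵒᵖ

/-- The left annihilator of an element of an `R`-bimodule, a left ideal of `R`:
`ann_l(x) = {s : R | s • x = 0}`, where the left action of `s` is the action of
`1 ⊗ op s`. -/
def lAnn {R : Type*} [Ring R] (M : Type*) [AddCommGroup M] [Module (Env R)ᵐᵒᵖ M]
    (x : M) : Ideal R where
  carrier := {s : R | op ((1 : R) ⊗ₜ[ℤ] op s) • x = 0}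
  zero_mem' := by simp <;> first | exact zero_smul _ x | exact zero_smul (Env R)ᵐᵒᵖ x
  add_mem' := by
    intro a b ha hb
    simp only [Set.mem_setOf_eq] at *
    rw [show ((1 : R) ⊗ₜ[ℤ] op (a + b)) = (1 : R) ⊗ₜ[ℤ] op a + (1 : R) ⊗ₜ[ℤ] op b by
        rw [op_add, TensorProduct.tmul_add],
      op_add, add_smul, ha, hb, add_zero]
  smul_mem' := by
    intro c s hs
    simp only [Set.mem_setOf_eq, smul_eq_mul] at *
    rw [show ((1 : R) ⊗ₜ[ℤ] op (c * s)) = ((1 : R) ⊗ₜ[ℤ] op s) * ((1 : R) ⊗ₜ[ℤ] op c) by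
        rw [Algebra.TensorProduct.tmul_mul_tmul, one_mul, ← op_mul],
      op_mul, mul_smul, hs, smul_zero]

/-- The right annihilator of an element of an `R`-bimodule, a right ideal of `R`
(encoded as a left ideal of `Rᵐᵒᵖ`): `ann_r(x) = {r | x • r = 0}`, where the right
action of `r` is the action of `r ⊗ 1`. -/
def rAnn {R : Type*} [Ring R] (M : Type*) [AddCommGroup M] [Module (Env R)ᵐᵒᵖ M]
    (x : M) : Ideal Rᵐᵒᵖ where
  carrier := {j : Rᵐᵒᵖ | op (unop j ⊗ₜ[ℤ] (1 : Rᵐᵒᵖ)) • x = 0}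
  zero_mem' := by simp <;> first | exact zero_smul _ x | exact zero_smul (Env R)ᵐᵒᵖ x
  add_mem' := by
    intro a b ha hb
    simp only [Set.mem_setOf_eq] at *
    rw [show (unop (a + b) ⊗ₜ[ℤ] (1 : Rᵐᵒᵖ)) =
          unop a ⊗ₜ[ℤ] (1 : Rᵐᵒᵖ) + unop b ⊗ₜ[ℤ] (1 : Rᵐᵒᵖ) by
        rw [unop_add, TensorProduct.add_tmul],
      op_add, add_smul, ha, hb, add_zero]
  smul_mem' := by
    intro c j hj
    simp only [Set.mem_setOf_eq, smul_eq_mul] at *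
    rw [show (unop (c * j) ⊗ₜ[ℤ] (1 : Rᵐᵒᵖ)) =
          (unop j ⊗ₜ[ℤ] (1 : Rᵐᵒᵖ)) * (unop c ⊗ₜ[ℤ] (1 : Rᵐᵒᵖ)) by
        rw [Algebra.TensorProduct.tmul_mul_tmul, one_mul, unop_mul],
      op_mul, mul_smul, hj, smul_zero]

/-- The symmetric annihilator of an element of a bimodule: the right ideal
`{t ∈ R ⊗_ℤ Rᵐᵒᵖ | x t = 0}`. -/
def symAnn {R : Type*} [Ring R] (M : Type*) [AddCommGroup M] [Module (Env R)ᵐᵒᵖ M]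
    (x : M) : Ideal (Env R)ᵐᵒᵖ :=
  LinearMap.ker (LinearMap.toSpanSingleton (Env R)ᵐᵒᵖ M x)

/-- The right ideal `J ⊗ Rᵐᵒᵖ + R ⊗ I` of `R ⊗_ℤ Rᵐᵒᵖ` generated by a left ideal `I`
and a right ideal `J` of `R`. -/
def symGen {R : Type*} [Ring R] (I : Ideal R) (J : Ideal Rᵐᵒᵖ) : Ideal (Env R)ᵐᵒᵖ :=
  Ideal.span ((fun j : Rᵐᵒᵖ => op (unop j ⊗ₜ[ℤ] (1 : Rᵐᵒᵖ))) '' (J : Set Rᵐᵒᵖ) ∪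
    (fun i : R => op ((1 : R) ⊗ₜ[ℤ] op i)) '' (I : Set R))

/-- The symmetric Gabriel filter induced by a left Gabriel filter `Fl` and a right
Gabriel filter `Fr`: the right ideals of `R ⊗_ℤ Rᵐᵒᵖ` containing `J ⊗ Rᵐᵒᵖ + R ⊗ I` for
some `I ∈ Fl` and `J ∈ Fr`. -/
def symSets {R : Type*} [Ring R] (Fl : GabrielFilter R) (Fr : GabrielFilter Rᵐᵒᵖ) :
    Set (Ideal (Env R)ᵐᵒᵖ) :=
  {K | ∃ I ∈ Fl.sets, ∃ J ∈ Fr.sets, symGen I J ≤ K}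

/-- The torsion submodule of a bimodule for the symmetric torsion theory induced by `Fl`
and `Fr`: `ₗt_r(M) = t_l(M) ∩ t_r(M)`. -/
def symTorsion {R : Type*} [Ring R] (Fl : GabrielFilter R) (Fr : GabrielFilter Rᵐᵒᵖ)
    (M : Type*) [AddCommGroup M] [Module (Env R)ᵐᵒᵖ M] : Set M :=
  {x : M | lAnn M x ∈ Fl.sets} ∩ {x : M | rAnn M x ∈ Fr.sets}

/-- `δ'` is the derivation induced on `R ⊗_ℤ Rᵐᵒᵖ` by the derivation `δ` on `R`:
`δ̄(r ⊗ s) = δ r ⊗ s + r ⊗ δ s`. -/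
def IsInducedDerivation {R : Type*} [Ring R] (δ : R → R) (δ' : Env R → Env R) : Prop :=
  (∀ a b : Env R, δ' (a + b) = δ' a + δ' b) ∧
    ∀ r s : R, δ' (r ⊗ₜ[ℤ] op s) = δ r ⊗ₜ[ℤ] op s + r ⊗ₜ[ℤ] op (δ s)

/-- `d` is a `δ`-derivation on the `R`-bimodule `M`: `d` is additive,
`d (x r) = (d x) r + x (δ r)` and `d (s x) = (δ s) x + s (d x)`. -/
def IsBimodDerivation {R : Type*} [Ring R] (δ : R → R) {M : Type*} [AddCommGroup M]
    [Module (Env R)ᵐᵒᵖ M] (d : M → M) : Prop :=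
  (∀ x y : M, d (x + y) = d x + d y) ∧
  (∀ (x : M) (r : R),
    d (op (r ⊗ₜ[ℤ] (1 : Rᵐᵒᵖ)) • x) =
      op (r ⊗ₜ[ℤ] (1 : Rᵐᵒᵖ)) • d x + op (δ r ⊗ₜ[ℤ] (1 : Rᵐᵒᵖ)) • x) ∧
  (∀ (x : M) (s : R),
    d (op ((1 : R) ⊗ₜ[ℤ] op s) • x) =
      op ((1 : R) ⊗ₜ[ℤ] op (δ s)) • x + op ((1 : R) ⊗ₜ[ℤ] op s) • d x)

/-- The symmetric filter induced by `Fl` and `Fr` is differential: for every `I` in the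
filter there is `K` in the filter with `δ̄(K) ⊆ I` for all derivations `δ` on `R`. -/
def IsSymDifferential {R : Type*} [Ring R] (Fl : GabrielFilter R)
    (Fr : GabrielFilter Rᵐᵒᵖ) : Prop :=
  ∀ I ∈ symSets Fl Fr, ∃ K ∈ symSets Fl Fr, ∀ δ : R → R, IsDerivation δ →
    ∀ δ' : Env R → Env R, IsInducedDerivation δ δ' →
      ∀ t : (Env R)ᵐᵒᵖ, t ∈ K → op (δ' (unop t)) ∈ I

/-- `q : M → Q` realizes `Q` as the symmetric module of quotients of the bimodule `M`
with respect to the symmetric filter induced by `Fl` and `Fr`: the kernel of `q` is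
`ₗt_r(M)`, `Q` is torsion free, the cokernel of `q` is torsion, and `Q` is closed. -/
structure IsSymModuleOfQuotients {R : Type*} [Ring R] (Fl : GabrielFilter R)
    (Fr : GabrielFilter Rᵐᵒᵖ) {M Q : Type*} [AddCommGroup M] [Module (Env R)ᵐᵒᵖ M]
    [AddCommGroup Q] [Module (Env R)ᵐᵒᵖ Q] (q : M →ₗ[(Env R)ᵐᵒᵖ] Q) : Prop where
  ker_eq : (LinearMap.ker q : Set M) = symTorsion Fl Fr M
  torsionFree : symTorsion Fl Fr Q = {0}
  coker_torsion : ∀ y : Q,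
    Submodule.comap (LinearMap.toSpanSingleton (Env R)ᵐᵒᵖ Q y) (LinearMap.range q) ∈
      symSets Fl Fr
  closed : ∀ K ∈ symSets Fl Fr, ∀ f : ↥K →ₗ[(Env R)ᵐᵒᵖ] Q,
    ∃ g : (Env R)ᵐᵒᵖ →ₗ[(Env R)ᵐᵒᵖ] Q, ∀ t : ↥K, g ↑t = f t

section Aux

variable {R : Type*} [Ring R]

/-- The derivation induced on `Env R` by an additive map `δ`. -/
noncomputable def dmap (δ : R → R) (h1 : ∀ a b : R, δ (a + b) = δ a + δ b) :
    Env R →ₗ[ℤ] Env R :=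
  TensorProduct.map (AddMonoidHom.mk' δ h1).toIntLinearMap LinearMap.id +
    TensorProduct.map LinearMap.id
      (AddMonoidHom.mk' (fun s : Rᵐᵒᵖ => op (δ (unop s)))
        (by intro a b; simp [h1])).toIntLinearMap

lemma dmap_tmul (δ : R → R) (h1 : ∀ a b : R, δ (a + b) = δ a + δ b) (r : R) (s : Rᵐᵒᵖ) :
    dmap δ h1 (r ⊗ₜ[ℤ] s) = δ r ⊗ₜ[ℤ] s + r ⊗ₜ[ℤ] op (δ (unop s)) := by
  exact (LinearMap.add_apply _ _ _).trans
    (congrArg₂ (· + ·) (TensorProduct.map_tmul ..) (TensorProduct.map_tmul ..))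

lemma dmap_isInduced (δ : R → R) (h1 : ∀ a b : R, δ (a + b) = δ a + δ b) :
    IsInducedDerivation δ (dmap δ h1) :=
  ⟨fun a b => map_add _ a b, fun r s => by simp [dmap_tmul]⟩

lemma dmap_mul {δ : R → R} (hδ : IsDerivation δ) (a b : Env R) :
    dmap δ hδ.1 (a * b) = dmap δ hδ.1 a * b + a * dmap δ hδ.1 b := by
  set D := dmap δ hδ.1 with hD
  induction a using TensorProduct.induction_on with
  | zero => simp
  | add a a' ha ha' => simp only [add_mul, map_add, ha, ha']; abel
  | tmul r s =>
    induction b using TensorProduct.induction_on with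
    | zero => simp
    | add b b' hb hb' => simp only [mul_add, map_add, hb, hb']; abel
    | tmul r' s' =>
      simp only [Algebra.TensorProduct.tmul_mul_tmul, hD, dmap_tmul, unop_mul,
        hδ.2, add_mul, mul_add, add_tmul, tmul_add, op_add, op_mul, op_unop]
      abel

end Aux

section Aux2

variable {R : Type*} [Ring R] {M : Type*} [AddCommGroup M] [Module (Env R)ᵐᵒᵖ M]

lemma mulop_smul (a b : Env R) (x : M) : op a • (op b • x) = op (b * a) • x := by
  rw [← mul_smul, ← op_mul]

lemma bd_zero {δ : R → R} {d : M → M} (hd : IsBimodDerivation δ d) : d 0 = 0 := by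
  have := hd.1 0 0
  simpa using this.symm

lemma bd_sub {δ : R → R} {d : M → M} (hd : IsBimodDerivation δ d) (x y : M) :
    d (x - y) = d x - d y := by
  have h : d (x - y) + d y = d x := by rw [← hd.1, sub_add_cancel]
  exact eq_sub_of_add_eq h

lemma bd_smul {δ : R → R} (hδ : IsDerivation δ) {d : M → M} (hd : IsBimodDerivation δ d)
    (v : Env R) (x : M) :
    d (op v • x) = op v • d x + op (dmap δ hδ.1 v) • x := by
  induction v using TensorProduct.induction_on with
  | zero =>
    have h0 : ∀ y : M, op (0 : Env R) • y = 0 := fun y => by rw [op_zero]; exact zero_smul (Env R)ᵐᵒᵖ y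
    simp only [map_zero, h0, bd_zero hd, add_zero]
  | add a b ha hb =>
      rw [op_add, add_smul, hd.1, ha, hb]
      simp only [map_add, op_add, add_smul]
      abel
  | tmul r s =>
      have h1 : op (r ⊗ₜ[ℤ] s) • x
          = op ((1:R) ⊗ₜ[ℤ] op (unop s)) • (op (r ⊗ₜ[ℤ] (1:Rᵐᵒᵖ)) • x) := by
        rw [mulop_smul, Algebra.TensorProduct.tmul_mul_tmul, mul_one, one_mul, op_unop]
      rw [h1, hd.2.2, hd.2.1]
      rw [smul_add (op ((1:R) ⊗ₜ[ℤ] op (unop s))) (op (r ⊗ₜ[ℤ] (1:Rᵐᵒᵖ)) • d x)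
        (op (δ r ⊗ₜ[ℤ] (1:Rᵐᵒᵖ)) • x)]
      simp only [mulop_smul, Algebra.TensorProduct.tmul_mul_tmul, mul_one,
        one_mul, op_unop, dmap_tmul, op_add, add_smul]
      abel

end Aux2

section Aux3

variable {R : Type*} [Ring R]

lemma symGen_mono {I I' : Ideal R} {J J' : Ideal Rᵐᵒᵖ} (hI : I' ≤ I) (hJ : J' ≤ J) :
    symGen I' J' ≤ symGen I J :=
  Ideal.span_mono (Set.union_subset_union (Set.image_mono hJ) (Set.image_mono hI))

lemma symSets_inf {Fl : GabrielFilter R} {Fr : GabrielFilter Rᵐᵒᵖ}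
    {K1 K2 : Ideal (Env R)ᵐᵒᵖ} (h1 : K1 ∈ symSets Fl Fr) (h2 : K2 ∈ symSets Fl Fr) :
    K1 ⊓ K2 ∈ symSets Fl Fr := by
  obtain ⟨I1, hI1, J1, hJ1, hle1⟩ := h1
  obtain ⟨I2, hI2, J2, hJ2, hle2⟩ := h2
  exact ⟨I1 ⊓ I2, Fl.inf_mem hI1 hI2, J1 ⊓ J2, Fr.inf_mem hJ1 hJ2,
    le_inf ((symGen_mono inf_le_left inf_le_left).trans hle1)
      ((symGen_mono inf_le_right inf_le_right).trans hle2)⟩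

lemma mem_symGen_l {I : Ideal R} {J : Ideal Rᵐᵒᵖ} {i : R} (hi : i ∈ I) :
    op ((1:R) ⊗ₜ[ℤ] op i) ∈ symGen I J :=
  Ideal.subset_span (Or.inr ⟨i, hi, rfl⟩)

lemma mem_symGen_r {I : Ideal R} {J : Ideal Rᵐᵒᵖ} {j : Rᵐᵒᵖ} (hj : j ∈ J) :
    op (unop j ⊗ₜ[ℤ] (1:Rᵐᵒᵖ)) ∈ symGen I J :=
  Ideal.subset_span (Or.inl ⟨j, hj, rfl⟩)

/-- The defining property of the value of the extended derivation at `y`. -/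
def ExtProp {R : Type*} [Ring R] {M Q : Type*} [AddCommGroup M] [Module (Env R)ᵐᵒᵖ M]
    [AddCommGroup Q] [Module (Env R)ᵐᵒᵖ Q] (q : M →ₗ[(Env R)ᵐᵒᵖ] Q)
    (D : Env R →ₗ[ℤ] Env R) (d : M → M) (y z : Q) : Prop :=
  ∀ (t : (Env R)ᵐᵒᵖ) (x : M), q x = t • y → t • z = q (d x) - op (D (unop t)) • y

end Aux3

set_option maxHeartbeats 2000000

/-- Let `δ` be a derivation on `R`, `M` an `R`-bimodule, `d` a
`δ`-derivation on `M` and `ₗF_r` the symmetric Gabriel filter induced by `Fl` and `Fr`.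
If `d(ₗt_r(M)) ⊆ ₗt_r(M)`, then `d` extends to a derivation `d'` on the symmetric module
of quotients `ₗM_r` such that `d' ∘ q_M = q_M ∘ d`. -/
theorem sym_extension_of_torsion_invariant {R : Type*} [Ring R]
    (δ : R → R) (hδ : IsDerivation δ)
    (Fl : GabrielFilter R) (Fr : GabrielFilter Rᵐᵒᵖ)
    {M Q : Type*} [AddCommGroup M] [Module (Env R)ᵐᵒᵖ M]
    [AddCommGroup Q] [Module (Env R)ᵐᵒᵖ Q]
    (d : M → M) (hd : IsBimodDerivation δ d)
    (q : M →ₗ[(Env R)ᵐᵒᵖ] Q) (hq : IsSymModuleOfQuotients Fl Fr q)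
    (hinv : ∀ x ∈ symTorsion Fl Fr M, d x ∈ symTorsion Fl Fr M) :
    ∃ d' : Q → Q, IsBimodDerivation δ d' ∧ ∀ x : M, d' (q x) = q (d x) := by
  classical
  set D := dmap δ hδ.1 with hDdef
  have hδ1 : δ (1:R) = 0 := by
    have h := hδ.2 1 1
    simp only [mul_one, one_mul] at h
    exact (left_eq_add.mp h)
  -- membership in the canonical ideal
  have memK : ∀ (y : Q) (t : (Env R)ᵐᵒᵖ),
      t ∈ Submodule.comap (LinearMap.toSpanSingleton (Env R)ᵐᵒᵖ Q y)
        (LinearMap.range q) ↔ ∃ x, q x = t • y := by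
    intro y t
    simp [Submodule.mem_comap, LinearMap.toSpanSingleton_apply, LinearMap.mem_range]
  -- kernel facts
  have hker : ∀ x : M, q x = 0 ↔ x ∈ symTorsion Fl Fr M := by
    intro x
    have h := Set.ext_iff.mp hq.ker_eq x
    simpa [LinearMap.mem_ker] using h
  have hqd : ∀ x : M, q x = 0 → q (d x) = 0 := fun x hx => (hker _).2 (hinv x ((hker x).1 hx))
  have wd : ∀ x x' : M, q x = q x' → q (d x) = q (d x') := by
    intro x x' h
    have h0 : q (x - x') = 0 := by rw [map_sub, h, sub_self]
    have h1 := hqd _ h0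
    rw [bd_sub hd, map_sub] at h1
    exact sub_eq_zero.mp h1
  -- torsion-freeness
  have kill : ∀ z : Q, (∃ K ∈ symSets Fl Fr, ∀ t ∈ K, t • z = 0) → z = 0 := by
    rintro z ⟨K, hK, h0⟩
    obtain ⟨I, hI, J, hJ, hle⟩ := hK
    have hz : z ∈ symTorsion Fl Fr Q := by
      constructor
      · exact Fl.mono hI (fun i hi => h0 _ (hle (mem_symGen_l hi)))
      · exact Fr.mono hJ (fun j hj => h0 _ (hle (mem_symGen_r hj)))
    rw [hq.torsionFree] at hz
    simpa using hz
  -- uniqueness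
  have Puniq : ∀ y z z', ExtProp q D d y z → ExtProp q D d y z' → z = z' := by
    intro y z z' h h'
    have h0 : z - z' = 0 := by
      refine kill _ ⟨_, hq.coker_torsion y, fun t ht => ?_⟩
      obtain ⟨x, hx⟩ := (memK y t).1 ht
      rw [smul_sub, h t x hx, h' t x hx, sub_self]
    exact sub_eq_zero.mp h0
  -- existence
  have Pex : ∀ y, ∃ z, ExtProp q D d y z := by
    intro y
    set K := Submodule.comap (LinearMap.toSpanSingleton (Env R)ᵐᵒᵖ Q y)
      (LinearMap.range q) with hKdef
    have hKmem := hq.coker_torsion y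
    have hex : ∀ t : ↥K, ∃ x, q x = (t : (Env R)ᵐᵒᵖ) • y := fun t => (memK y t).1 t.2
    choose xc hxc using hex
    set f : ↥K →ₗ[(Env R)ᵐᵒᵖ] Q :=
      { toFun := fun t => q (d (xc t)) - op (D (unop (t : (Env R)ᵐᵒᵖ))) • y
        map_add' := by
          intro s t
          have h1 : q (xc (s + t)) = q (xc s + xc t) := by
            rw [hxc, map_add, hxc, hxc, Submodule.coe_add, _root_.add_smul]
          rw [wd _ _ h1, hd.1, map_add]
          simp only [Submodule.coe_add, unop_add, map_add, op_add, _root_.add_smul]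
          abel
        map_smul' := by
          intro c t
          have hco : ((c • t : ↥K) : (Env R)ᵐᵒᵖ) = c * ↑t := rfl
          have h1 : q (xc (c • t)) = q (c • xc t) := by
            rw [hxc, map_smul, hxc, hco, mul_smul]
          have h3 : d (c • xc t) = c • d (xc t) + op (D (unop c)) • xc t := by
            have h := bd_smul hδ hd (unop c) (xc t)
            rwa [op_unop] at h
          rw [RingHom.id_apply, wd _ _ h1, h3, map_add, q.map_smul, q.map_smul, hxc, hco,
            unop_mul]
          rw [show D (unop (t:(Env R)ᵐᵒᵖ) * unop c)
              = D (unop (t:(Env R)ᵐᵒᵖ)) * unop c + unop (t:(Env R)ᵐᵒᵖ) * D (unop c)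
              from dmap_mul hδ _ _]
          rw [op_add, _root_.add_smul, op_mul, op_mul, op_unop, op_unop, mul_smul, mul_smul,
            smul_sub]
          abel }
    obtain ⟨g, hg⟩ := hq.closed K hKmem f
    refine ⟨g 1, ?_⟩
    intro t x hx
    have htK : t ∈ K := (memK y t).2 ⟨x, hx⟩
    have h1 : t • g 1 = g t := by rw [← map_smul, smul_eq_mul, mul_one]
    rw [h1, hg ⟨t, htK⟩]
    show q (d (xc ⟨t, htK⟩)) - op (D (unop t)) • y = q (d x) - op (D (unop t)) • y
    rw [wd _ _ (show q (xc ⟨t, htK⟩) = q x from by rw [hxc]; exact hx.symm)]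
  choose d' hd' using Pex
  -- the Leibniz property of d'
  have Psmul : ∀ (v : Env R) (y : Q),
      ExtProp q D d (op v • y) (op v • d' y + op (D v) • y) := by
    intro v y t x hx
    have hx' : q x = (t * op v) • y := by rw [hx, mul_smul]
    have h := hd' y (t * op v) x hx'
    rw [_root_.smul_add t (op v • d' y) (op (D v) • y), ← mul_smul, ← mul_smul, h, unop_mul, unop_op]
    rw [show D (v * unop t) = D v * unop t + v * D (unop t) from dmap_mul hδ _ _]
    rw [op_add, _root_.add_smul, op_mul, op_mul, op_unop]
    rw [show t * op (D v) = op (unop t) * op (D v) from by rw [op_unop]]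
    rw [mul_smul, mul_smul]
    abel
  refine ⟨d', ⟨?_, ?_, ?_⟩, ?_⟩
  · -- additivity
    intro y y'
    have h0 : d' (y + y') - (d' y + d' y') = 0 := by
      refine kill _ ⟨_, symSets_inf (hq.coker_torsion y) (hq.coker_torsion y'), ?_⟩
      intro t ht
      rw [Submodule.mem_inf] at ht
      obtain ⟨x1, hx1⟩ := (memK y t).1 ht.1
      obtain ⟨x2, hx2⟩ := (memK y' t).1 ht.2
      have hx : q (x1 + x2) = t • (y + y') := by
        rw [map_add, hx1, hx2]
        exact (_root_.smul_add t y y').symm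
      have h1 := hd' (y + y') t (x1 + x2) hx
      have h2 := hd' y t x1 hx1
      have h3 := hd' y' t x2 hx2
      rw [smul_sub, _root_.smul_add t (d' y) (d' y'), h1, h2, h3, hd.1, map_add,
        _root_.smul_add (op (D (unop t))) y y']
      abel
    exact sub_eq_zero.mp h0
  · -- left (r ⊗ 1) rule
    intro y r
    have hD1 : D (r ⊗ₜ[ℤ] (1:Rᵐᵒᵖ)) = δ r ⊗ₜ[ℤ] (1:Rᵐᵒᵖ) := by
      rw [hDdef, dmap_tmul]
      simp [hδ1]
    have h := Puniq _ _ _ (hd' (op (r ⊗ₜ[ℤ] (1:Rᵐᵒᵖ)) • y))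
      (Psmul (r ⊗ₜ[ℤ] (1:Rᵐᵒᵖ)) y)
    rw [h, hD1]
  · -- right (1 ⊗ s) rule
    intro y s
    have hD1 : D ((1:R) ⊗ₜ[ℤ] op s) = (1:R) ⊗ₜ[ℤ] op (δ s) := by
      rw [hDdef, dmap_tmul]
      simp [hδ1]
    have h := Puniq _ _ _ (hd' (op ((1:R) ⊗ₜ[ℤ] op s) • y))
      (Psmul ((1:R) ⊗ₜ[ℤ] op s) y)
    rw [h, hD1, add_comm]
  · -- compatibility with q
    intro x
    refine Puniq _ _ _ (hd' (q x)) ?_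
    intro t x' hx'
    have hx'' : q x' = q (t • x) := by rw [hx', map_smul]
    have h3 : d (t • x) = t • d x + op (D (unop t)) • x := by
      have h := bd_smul hδ hd (unop t) x
      rwa [op_unop] at h
    rw [wd _ _ hx'', h3, map_add, q.map_smul, q.map_smul]
    abel
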